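/- The pair ρ(x,t) = M₀ e^{−(x−ct)²/2} / ∫e^{−y²/2}dy, u(x,t) = c (constant velocity c) is an exact traveling-wave solution of the Euler system with P(ρ) = ρ, W(x) = x²/2, no external potential, no linear damping, and Cucker–Smale alignment term, i.e. it satisfies ∂ₜρ + ∂ₓ(ρu) = 0 and ∂ₜ(ρu) + ∂ₓ(ρu²) = −∂ₓρ − ρ∂ₓ(W⋆ρ) − ρ∫ψ(x−y)(u(x)−u(y))ρ(y)dy for any symmetric ψ. -/

import Mathlib

open MeasureTheory

/-- The travelling Gaussian `ρ(x,t) = M₀ e^{-(x-ct)²/2}/∫e^{-y²/2}` with constant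
velocity `u ≡ c` is an exact travelling-wave solution of the Euler system with
`P(ρ) = ρ`, interaction potential `W(x) = x²/2`, no external potential, no linear
damping, and Cucker–Smale alignment, for any symmetric communication function `ψ`. -/
noncomputable def Egauss (y : ℝ) : ℝ := Real.exp (-(y^2)/2)

lemma Egauss_eq (y : ℝ) : Egauss y = Real.exp (-(1/2 : ℝ) * y^2) := by
  unfold Egauss; ring_nf

lemma Egauss_hasDerivAt (y : ℝ) : HasDerivAt Egauss (-y * Egauss y) y := by
  have h : HasDerivAt (fun y : ℝ => -(y^2)/2) (-y) y := by
    have := ((hasDerivAt_pow 2 y).neg.div_const 2)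
    exact this.congr_deriv (by push_cast; ring)
  have := h.exp
  have he : Egauss = fun x : ℝ => Real.exp (-(x^2)/2) := rfl
  rw [he]
  convert this using 1
  ring

lemma Egauss_integrable : Integrable Egauss := by
  have := integrable_exp_neg_mul_sq (b := (1/2 : ℝ)) (by norm_num)
  have he : Egauss = fun x : ℝ => Real.exp (-(1/2 : ℝ) * x^2) := funext Egauss_eq
  rw [he]
  convert this using 2

lemma mul_Egauss_integrable : Integrable (fun y : ℝ => y * Egauss y) := by
  have := integrable_mul_exp_neg_mul_sq (b := (1/2 : ℝ)) (by norm_num)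
  have he : (fun y : ℝ => y * Egauss y) = fun x : ℝ => x * Real.exp (-(1/2 : ℝ) * x^2) := by
    funext y; rw [Egauss_eq]
  rw [he]
  convert this using 2

lemma sq_mul_Egauss_integrable : Integrable (fun y : ℝ => y^2 * Egauss y) := by
  have := integrable_rpow_mul_exp_neg_mul_sq (b := (1/2 : ℝ)) (by norm_num)
    (s := 2) (by norm_num)
  have h2 : ∀ y : ℝ, y ^ (2:ℝ) = y ^ 2 := fun y => by
    rw [← Real.rpow_natCast y 2]; norm_num
  have he : (fun y : ℝ => y^2 * Egauss y) = fun x : ℝ => x ^ (2:ℝ) * Real.exp (-(1/2 : ℝ) * x^2) := by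
    funext y; rw [Egauss_eq, h2]
  rw [he]
  convert this using 3

lemma integral_mul_Egauss : ∫ y : ℝ, y * Egauss y = 0 := by
  have h := MeasureTheory.integral_neg_eq_self (fun y : ℝ => y * Egauss y) volume
  have : ∀ y : ℝ, (-y) * Egauss (-y) = -(y * Egauss y) := by
    intro y; unfold Egauss; rw [neg_pow]; ring_nf
  rw [show (fun y : ℝ => (-y) * Egauss (-y)) = fun y : ℝ => -(y * Egauss y) from funext this,
    integral_neg] at h
  linarith

lemma gauss_shift_integrable (a : ℝ) : Integrable (fun z : ℝ => Egauss (z - a)) :=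
  Egauss_integrable.comp_sub_right a

lemma mul_gauss_shift_integrable (a : ℝ) : Integrable (fun z : ℝ => z * Egauss (z - a)) := by
  have h : Integrable (fun w : ℝ => (w + a) * Egauss w) := by
    have := mul_Egauss_integrable.add (Egauss_integrable.const_mul a)
    have he : (fun w : ℝ => (w + a) * Egauss w)
        = fun w : ℝ => w * Egauss w + a * Egauss w := funext fun w => by ring
    rw [he]; exact this
  have := h.comp_sub_right a
  simpa [sub_add_cancel] using this

lemma sq_mul_gauss_shift_integrable (a : ℝ) :
    Integrable (fun z : ℝ => z^2/2 * Egauss (z - a)) := by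
  have h : Integrable (fun w : ℝ => (w + a)^2/2 * Egauss w) := by
    have := ((sq_mul_Egauss_integrable.const_mul (1/2)).add
      (mul_Egauss_integrable.const_mul a)).add (Egauss_integrable.const_mul (a^2/2))
    have he : (fun w : ℝ => (w + a)^2/2 * Egauss w)
        = fun w : ℝ => (1/2 * (w^2 * Egauss w) + a * (w * Egauss w)) + a^2/2 * Egauss w :=
      funext fun w => by ring
    rw [he]; exact this
  have := h.comp_sub_right a
  simpa [sub_add_cancel] using this

lemma integral_gauss_shift (a : ℝ) :
    ∫ z : ℝ, Egauss (z - a) = ∫ z : ℝ, Egauss z :=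
  integral_sub_right_eq_self Egauss a

lemma integral_mul_gauss_shift (a : ℝ) :
    ∫ z : ℝ, z * Egauss (z - a) = a * ∫ z : ℝ, Egauss z := by
  have h1 : (fun z : ℝ => z * Egauss (z - a))
      = fun z => (fun w => (w + a) * Egauss w) (z - a) := funext fun z => by simp
  rw [h1, integral_sub_right_eq_self (fun w => (w + a) * Egauss w) a]
  have h2 : (fun w : ℝ => (w + a) * Egauss w)
      = fun w : ℝ => w * Egauss w + a * Egauss w := funext fun w => by ring
  rw [h2, integral_add mul_Egauss_integrable (Egauss_integrable.const_mul a),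
    integral_mul_Egauss, integral_const_mul, zero_add]

lemma integral_Egauss_pos : 0 < ∫ y : ℝ, Egauss y := by
  have he : Egauss = fun x : ℝ => Real.exp (-(1/2:ℝ) * x^2) := funext Egauss_eq
  rw [he, integral_gaussian]
  have := Real.pi_pos
  positivity

lemma conv_deriv (a Z : ℝ) (hZ : Z = ∫ y : ℝ, Egauss y) (x : ℝ) :
    deriv (fun y => ∫ z : ℝ, ((y - z)^2/2) * (Egauss (z - a) / Z)) x = x - a := by
  have hZpos : 0 < Z := hZ ▸ integral_Egauss_pos
  set D := ∫ z : ℝ, z^2/2 * Egauss (z - a) with hD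
  have key : (fun y => ∫ z : ℝ, ((y - z)^2/2) * (Egauss (z - a) / Z))
      = fun y => (y^2/2 * Z - y * (a * Z) + D) / Z := by
    funext y
    have e1 : (fun z : ℝ => ((y - z)^2/2) * (Egauss (z - a) / Z))
        = fun z : ℝ => (y^2/2 * Egauss (z - a) - y * (z * Egauss (z - a))
            + z^2/2 * Egauss (z - a)) / Z := funext fun z => by ring
    rw [e1, integral_div]
    congr 1
    have hfg : Integrable (fun z : ℝ => y^2/2 * Egauss (z - a) - y * (z * Egauss (z - a))) :=
      ((gauss_shift_integrable a).const_mul _).sub ((mul_gauss_shift_integrable a).const_mul y)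
    rw [integral_add hfg (sq_mul_gauss_shift_integrable a),
      integral_sub ((gauss_shift_integrable a).const_mul _)
        ((mul_gauss_shift_integrable a).const_mul y),
      integral_const_mul, integral_const_mul, integral_gauss_shift, integral_mul_gauss_shift, ← hZ]
  rw [key]
  have h : HasDerivAt (fun y : ℝ => (y^2/2 * Z - y * (a * Z) + D) / Z)
      (((2 * x^1 / 2) * Z - 1 * (a * Z)) / Z) x := by
    exact (((((hasDerivAt_pow 2 x).div_const 2).mul_const Z).sub
      ((hasDerivAt_id x).mul_const (a * Z))).add_const D).div_const Z
  rw [h.deriv]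
  field_simp

theorem stmt_11 (M₀ c : ℝ) (hM : M₀ = 1) (ψ : ℝ → ℝ) (hψsymm : ∀ x, ψ (-x) = ψ x)
    (Z : ℝ) (hZ : Z = ∫ y : ℝ, Real.exp (-(y^2)/2))
    (ρ : ℝ → ℝ → ℝ)
    (hρ : ∀ t x, ρ t x = M₀ * Real.exp (-((x - c*t)^2)/2) / Z) :
    (∀ t x : ℝ, deriv (fun s => ρ s x) t + deriv (fun y => ρ t y * c) x = 0) ∧
    (∀ t x : ℝ, deriv (fun s => ρ s x * c) t + deriv (fun y => ρ t y * c^2) x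
      = -(deriv (fun y => ρ t y) x)
        - ρ t x * deriv (fun y => ∫ z : ℝ, ((y - z)^2/2) * ρ t z) x
        - ρ t x * ∫ z : ℝ, ψ (x - z) * (c - c) * ρ t z) := by
  subst hM
  simp only [one_mul] at hρ
  have hρ' : ∀ t x, ρ t x = Egauss (x - c*t) / Z := hρ
  have hZ' : Z = ∫ y : ℝ, Egauss y := hZ
  have hZpos : 0 < Z := hZ' ▸ integral_Egauss_pos
  -- time derivative
  have ht : ∀ t x : ℝ, HasDerivAt (fun s => ρ s x)
      (c * (x - c*t) * Egauss (x - c*t) / Z) t := by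
    intro t x
    have hin : HasDerivAt (fun s : ℝ => x - c*s) (-c) t := by
      simpa using ((hasDerivAt_id t).const_mul c).const_sub x
    have h := (((Egauss_hasDerivAt (x - c*t)).comp t hin).div_const Z)
    have heq : (fun s => ρ s x) = fun s => Egauss (x - c*s) / Z :=
      funext fun s => hρ' s x
    rw [heq]
    exact h.congr_deriv (by ring)
  -- space derivative
  have hx : ∀ t x : ℝ, HasDerivAt (fun y => ρ t y)
      (-(x - c*t) * Egauss (x - c*t) / Z) x := by
    intro t x
    have hin : HasDerivAt (fun y : ℝ => y - c*t) 1 x := (hasDerivAt_id x).sub_const _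
    have h := ((Egauss_hasDerivAt (x - c*t)).comp x hin).div_const Z
    have heq : (fun y => ρ t y) = fun y => Egauss (y - c*t) / Z :=
      funext fun y => hρ' t y
    rw [heq]
    exact h.congr_deriv (by ring)
  constructor
  · intro t x
    rw [(ht t x).deriv, ((hx t x).mul_const c).deriv]
    ring
  · intro t x
    have hconv : deriv (fun y => ∫ z : ℝ, ((y - z)^2/2) * ρ t z) x = x - c*t := by
      have heq : (fun y => ∫ z : ℝ, ((y - z)^2/2) * ρ t z)
          = fun y => ∫ z : ℝ, ((y - z)^2/2) * (Egauss (z - c*t) / Z) := by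
        funext y; congr 1; funext z; rw [hρ' t z]
      rw [heq, conv_deriv (c*t) Z hZ' x]
    have h0 : (∫ z : ℝ, ψ (x - z) * (c - c) * ρ t z) = 0 := by simp
    rw [((ht t x).mul_const c).deriv, ((hx t x).mul_const (c^2)).deriv,
      (hx t x).deriv, hconv, h0, hρ' t x]
    ring
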